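/- Let E be a pseudo effect algebra satisfying (RDP) with S(E) ≠ ∅, and let F be a face of S(E). Then the complementary face F′ of F equals the set of all states s′ ∈ S(E) such that s′ ∧ s = 0 (infimum taken in the lattice-ordered group J(E)) for every state s ∈ F; equivalently, F′ consists of all states s′ ∈ S(E) such that whenever s ∈ F and α ≥ 0 satisfy α·s ≤⁺ s′, then α = 0. -/

import Mathlib

universe u v

/-- A pseudo effect algebra: a partial algebra `(E; +, 0, 1)` with a partially defined
binary operation (modelled as `E → E → Option E`) satisfying (i)-(iv). -/
structure PseudoEffectAlgebra (E : Type u) where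
  add : E → E → Option E
  zero : E
  one : E
  /-- (i) `a+b` and `(a+b)+c` exist iff `b+c` and `a+(b+c)` exist, and then they are equal. -/
  assoc : ∀ a b c x : E,
    (∃ ab, add a b = some ab ∧ add ab c = some x) ↔
    (∃ bc, add b c = some bc ∧ add a bc = some x)
  /-- (ii) there is exactly one `d` with `a + d = 1`. -/
  rinv : ∀ a : E, ∃! d, add a d = some one
  /-- (ii) there is exactly one `e` with `e + a = 1`. -/
  linv : ∀ a : E, ∃! e, add e a = some one
  /-- (iii) if `a+b` exists there are `d, e` with `a+b = d+a = b+e`. -/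
  com_ex : ∀ a b ab : E, add a b = some ab →
    (∃ d, add d a = some ab) ∧ (∃ e, add b e = some ab)
  /-- (iv) if `1 + a` exists then `a = 0`. -/
  one_add : ∀ a x : E, add one a = some x → a = zero
  /-- (iv) if `a + 1` exists then `a = 0`. -/
  add_one : ∀ a x : E, add a one = some x → a = zero

namespace PseudoEffectAlgebra

variable {E : Type u}

/-- `a ≤ b` iff `a + c = b` for some `c`. -/
def le (P : PseudoEffectAlgebra E) (a b : E) : Prop := ∃ c, P.add a c = some b

/-- The Riesz Decomposition Property (RDP). -/
def RDP (P : PseudoEffectAlgebra E) : Prop :=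
  ∀ a₁ a₂ b₁ b₂ x : E, P.add a₁ a₂ = some x → P.add b₁ b₂ = some x →
    ∃ d₁ d₂ d₃ d₄, P.add d₁ d₂ = some a₁ ∧ P.add d₃ d₄ = some a₂ ∧
      P.add d₁ d₃ = some b₁ ∧ P.add d₂ d₄ = some b₂

/-- A pseudo effect algebra with commutative `+` is an effect algebra. -/
def Commutative (P : PseudoEffectAlgebra E) : Prop := ∀ a b : E, P.add a b = P.add b a

/-- A signed measure: additive on existing sums. -/
def IsSignedMeasure (P : PseudoEffectAlgebra E) (m : E → ℝ) : Prop :=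
  ∀ a b ab : E, P.add a b = some ab → m ab = m a + m b

/-- A measure: a nonnegative signed measure. -/
def IsMeasure (P : PseudoEffectAlgebra E) (m : E → ℝ) : Prop :=
  IsSignedMeasure P m ∧ ∀ a : E, 0 ≤ m a

/-- A state: a normalized measure. -/
def IsState (P : PseudoEffectAlgebra E) (s : E → ℝ) : Prop :=
  IsMeasure P s ∧ s P.one = 1

/-- A Jordan signed measure: a difference of two measures. -/
def IsJordan (P : PseudoEffectAlgebra E) (m : E → ℝ) : Prop :=
  ∃ m₁ m₂ : E → ℝ, IsMeasure P m₁ ∧ IsMeasure P m₂ ∧ m = m₁ - m₂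

/-- `J(E)`, the set of Jordan signed measures. -/
def Jordan (P : PseudoEffectAlgebra E) : Set (E → ℝ) := {m | IsJordan P m}

/-- `M⁺(E)`, the set of measures. -/
def Measures (P : PseudoEffectAlgebra E) : Set (E → ℝ) := {m | IsMeasure P m}

/-- `S(E)`, the set of states. -/
def States (P : PseudoEffectAlgebra E) : Set (E → ℝ) := {s | IsState P s}

/-- `sup` is the least upper bound of `S` computed within the subset `J`
(with the pointwise order `≤⁺` on functions). -/
def IsLubIn (J S : Set (E → ℝ)) (sup : E → ℝ) : Prop :=
  sup ∈ J ∧ (∀ m ∈ S, m ≤ sup) ∧ ∀ b ∈ J, (∀ m ∈ S, m ≤ b) → sup ≤ b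

/-- `inf` is the greatest lower bound of `S` computed within the subset `J`. -/
def IsGlbIn (J S : Set (E → ℝ)) (inf : E → ℝ) : Prop :=
  inf ∈ J ∧ (∀ m ∈ S, inf ≤ m) ∧ ∀ b ∈ J, (∀ m ∈ S, b ≤ m) → b ≤ inf

/-- `SumList P [x₁, …, xₙ] x` means the sum `x₁ + ⋯ + xₙ` is defined in `E` and equals `x`. -/
inductive SumList (P : PseudoEffectAlgebra E) : List E → E → Prop
  | single (a : E) : SumList P [a] a
  | cons {l : List E} {b : E} (a ab : E) :
      SumList P l b → P.add a b = some ab → SumList P (a :: l) ab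

/-- A face of a convex set `K`: a convex extreme subset. -/
def IsFace (K F : Set (E → ℝ)) : Prop := Convex ℝ F ∧ IsExtreme ℝ K F

/-- The complementary face `F'` of `F` in `K`: the union of all faces of `K` disjoint from `F`. -/
def ComplFace (K F : Set (E → ℝ)) : Set (E → ℝ) :=
  ⋃₀ {G | IsFace K G ∧ Disjoint G F}

/-- The cone `V(F) = {α s : α ≥ 0, s ∈ F}` generated by a subset `F` of the state space. -/
def VCone (F : Set (E → ℝ)) : Set (E → ℝ) :=
  {m | ∃ α : ℝ, 0 ≤ α ∧ ∃ s ∈ F, m = α • s}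

/-- `V(F)` is `∨`-closed: for every chain in `V(F)` bounded above in `M⁺(E)`,
the supremum taken in `J(E)` belongs to `V(F)`. -/
def VeeClosed (P : PseudoEffectAlgebra E) (F : Set (E → ℝ)) : Prop :=
  ∀ C : Set (E → ℝ), C ⊆ VCone F → C.Nonempty → IsChain (· ≤ ·) C →
    (∃ b ∈ Measures P, ∀ m ∈ C, m ≤ b) →
    ∀ msup : E → ℝ, IsLubIn (Jordan P) C msup → msup ∈ VCone F

/-- `a` is the supremum of `S ⊆ E` in the partial order of `E`. -/
def IsLUBe (P : PseudoEffectAlgebra E) (S : Set E) (a : E) : Prop :=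
  (∀ x ∈ S, P.le x a) ∧ ∀ b : E, (∀ x ∈ S, P.le x b) → P.le a b

/-- A σ-additive (signed) measure. -/
def SigmaAdditive (P : PseudoEffectAlgebra E) (m : E → ℝ) : Prop :=
  ∀ (a_ : ℕ → E) (a : E), (∀ n : ℕ, P.le (a_ n) (a_ (n + 1))) →
    IsLUBe P (Set.range a_) a →
    Filter.Tendsto (fun n => m (a_ n)) Filter.atTop (nhds (m a))

/-- An upwards continuous (signed) measure: `{a_t} ↑ a` implies `{m(a_t)} ↑ m(a)`. -/
def UpwardsContinuous (P : PseudoEffectAlgebra E) (m : E → ℝ) : Prop :=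
  ∀ {T : Type v} [Nonempty T] (a_ : T → E) (a : E),
    (∀ s t : T, ∃ r : T, P.le (a_ s) (a_ r) ∧ P.le (a_ t) (a_ r)) →
    IsLUBe P (Set.range a_) a →
    IsLUB (Set.range fun t => m (a_ t)) (m a)

/-- The system `{a_t}_{t ∈ T}` is summable with sum `a`: every finite subsystem
(coded by a duplicate-free list) has a sum in `E`, and `a` is the supremum of
all such finite partial sums. -/
def IsSummableSum (P : PseudoEffectAlgebra E) {T : Type v} (a_ : T → E) (a : E) : Prop :=
  (∀ l : List T, l ≠ [] → l.Nodup → ∃ x : E, SumList P (l.map a_) x) ∧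
  IsLUBe P {x : E | ∃ l : List T, l.Nodup ∧ SumList P (l.map a_) x} a

/-- A completely additive (signed) measure: whenever `a = Σ_{t∈T} a_t`, the value `m a`
is the supremum of the finite partial sums `Σ_{t∈F} m (a_t)`. -/
def CompletelyAdditive (P : PseudoEffectAlgebra E) (m : E → ℝ) : Prop :=
  ∀ {T : Type v} (a_ : T → E) (a : E), IsSummableSum P a_ a →
    IsLUB {r : ℝ | ∃ l : List T, l.Nodup ∧ r = (l.map (fun t => m (a_ t))).sum} (m a)

/-- An ideal of a pseudo effect algebra. -/
def IsIdeal (P : PseudoEffectAlgebra E) (I : Set E) : Prop :=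
  P.zero ∈ I ∧
  (∀ a ∈ I, ∀ b ∈ I, ∀ ab : E, P.add a b = some ab → ab ∈ I) ∧
  (∀ a b : E, b ∈ I → P.le a b → a ∈ I)

/-- A normal ideal: `a + I = I + a` for all `a`. -/
def IsNormalIdeal (P : PseudoEffectAlgebra E) (I : Set E) : Prop :=
  IsIdeal P I ∧
  ∀ a : E, {x : E | ∃ b ∈ I, P.add a b = some x} = {x : E | ∃ b ∈ I, P.add b a = some x}

/-- `m₁ ≪_ε m₂`: `m₁` is `m₂`-continuous. -/
def EpsCont (m₁ m₂ : E → ℝ) : Prop :=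
  ∀ ε : ℝ, 0 < ε → ∃ δ : ℝ, 0 < δ ∧ ∀ a : E, m₂ a < δ → m₁ a < ε

/-- `m₁ ≪ m₂`: `m₁` is absolutely continuous with respect to `m₂`. -/
def AbsCont (m₁ m₂ : E → ℝ) : Prop := ∀ a : E, m₂ a = 0 → m₁ a = 0

/-- `a⁻ = 1 ⧵ a`, the unique element with `a⁻ + a = 1`. -/
noncomputable def lneg (P : PseudoEffectAlgebra E) (a : E) : E := (P.linv a).exists.choose

/-- `a` is central (Boolean): `a ∧ a⁻ = 0`. -/
def IsCentral (P : PseudoEffectAlgebra E) (a : E) : Prop :=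
  ∀ x : E, P.le x a → P.le x (lneg P a) → x = P.zero

/-- `E` is monotone σ-complete. -/
def MonotoneSigmaComplete (P : PseudoEffectAlgebra E) : Prop :=
  ∀ a_ : ℕ → E, (∀ n : ℕ, P.le (a_ n) (a_ (n + 1))) → ∃ a : E, IsLUBe P (Set.range a_) a

/-- `m ⊥ t`: there is `a ∈ E` with `t a = 0` and `m a⁻ = 0`. -/
def Perp (P : PseudoEffectAlgebra E) (m t : E → ℝ) : Prop :=
  ∃ a : E, t a = 0 ∧ m (lneg P a) = 0

/-- Unique decomposition of every measure `m` as `m = m₁ + m₂` with `m₁` a measure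
satisfying `Q` and `m₂` a measure singular with respect to the measures satisfying `Q`. -/
def MeasDecomp (P : PseudoEffectAlgebra E) (Q : (E → ℝ) → Prop) : Prop :=
  ∀ m ∈ Measures P, ∃ m₁ m₂ : E → ℝ,
    (IsMeasure P m₁ ∧ Q m₁) ∧ IsMeasure P m₂ ∧
    (∀ t : E → ℝ, IsMeasure P t → Q t → t ≤ m₂ → t = 0) ∧
    m = m₁ + m₂ ∧
    (∀ m₁' m₂' : E → ℝ, (IsMeasure P m₁' ∧ Q m₁') → IsMeasure P m₂' →
      (∀ t : E → ℝ, IsMeasure P t → Q t → t ≤ m₂' → t = 0) →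
      m = m₁' + m₂' → m₁' = m₁ ∧ m₂' = m₂)

/-- Unique convex decomposition of every state `s` as `s = λ₁ s₁ + λ₂ s₂` with `s₁` a state
satisfying `Q` and `s₂` a state such that `α s' ≤⁺ s₂` with `s'` a state satisfying `Q`
and `α ≥ 0` forces `α = 0`. -/
def StateDecomp (P : PseudoEffectAlgebra E) (Q : (E → ℝ) → Prop) : Prop :=
  ∀ s ∈ States P, ∃ l₁ l₂ : ℝ, 0 ≤ l₁ ∧ 0 ≤ l₂ ∧ l₁ + l₂ = 1 ∧
    ∃ s₁ s₂ : E → ℝ,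
      (IsState P s₁ ∧ Q s₁) ∧ IsState P s₂ ∧
      (∀ (s' : E → ℝ) (α : ℝ), IsState P s' → Q s' → 0 ≤ α → α • s' ≤ s₂ → α = 0) ∧
      s = l₁ • s₁ + l₂ • s₂ ∧
      (∀ (μ₁ μ₂ : ℝ) (s₁' s₂' : E → ℝ), 0 ≤ μ₁ → 0 ≤ μ₂ → μ₁ + μ₂ = 1 →
        (IsState P s₁' ∧ Q s₁') → IsState P s₂' →
        (∀ (s' : E → ℝ) (α : ℝ), IsState P s' → Q s' → 0 ≤ α → α • s' ≤ s₂' → α = 0) →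
        s = μ₁ • s₁' + μ₂ • s₂' →
        μ₁ = l₁ ∧ μ₂ = l₂ ∧ (l₁ ≠ 0 → s₁' = s₁) ∧ (l₂ ≠ 0 → s₂' = s₂))

end PseudoEffectAlgebra

open PseudoEffectAlgebra

namespace Stmt4Aux

open PseudoEffectAlgebra

variable {E : Type u}

section Basic
variable (P : PseudoEffectAlgebra E)

lemma one_zero : P.add P.one P.zero = some P.one := by
  obtain ⟨d, hd, -⟩ := P.rinv P.one
  have h := P.one_add d P.one hd
  rwa [h] at hd

lemma zero_one : P.add P.zero P.one = some P.one := by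
  obtain ⟨e, he, -⟩ := P.linv P.one
  have h := P.add_one e P.one he
  rwa [h] at he

lemma add_zero' (a : E) : P.add a P.zero = some a := by
  obtain ⟨e, he, -⟩ := P.linv a
  obtain ⟨bc, hbc, hebc⟩ := (P.assoc e a P.zero P.one).1 ⟨P.one, he, one_zero P⟩
  obtain ⟨d, hd, hu⟩ := P.rinv e
  have hba : bc = a := by rw [hu bc hebc, hu a he]
  rwa [hba] at hbc

lemma zero_add' (a : E) : P.add P.zero a = some a := by
  obtain ⟨d, hd, -⟩ := P.rinv a
  obtain ⟨ab, hab, habd⟩ := (P.assoc P.zero a d P.one).2 ⟨P.one, hd, zero_one P⟩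
  obtain ⟨e, he, hu⟩ := P.linv d
  have hba : ab = a := by rw [hu ab habd, hu a hd]
  rwa [hba] at hab

lemma combine {x₁ y₁ a x₂ y₂ b c : E}
    (h1 : P.add x₁ y₁ = some a) (h2 : P.add x₂ y₂ = some b) (h3 : P.add a b = some c) :
    ∃ X Y d c₁, P.add d y₁ = some c₁ ∧ P.add y₁ x₂ = some c₁ ∧
      P.add x₁ d = some X ∧ P.add y₁ y₂ = some Y ∧ P.add X Y = some c := by
  obtain ⟨bc₁, hbc₁, hx₁bc₁⟩ := (P.assoc x₁ y₁ b c).1 ⟨a, h1, h3⟩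
  obtain ⟨c₁, hc₁, hc₁y₂⟩ := (P.assoc y₁ x₂ y₂ bc₁).2 ⟨b, h2, hbc₁⟩
  obtain ⟨⟨d, hd⟩, -⟩ := P.com_ex y₁ x₂ c₁ hc₁
  obtain ⟨Y, hY, hdY⟩ := (P.assoc d y₁ y₂ bc₁).1 ⟨c₁, hd, hc₁y₂⟩
  obtain ⟨X, hX, hXY⟩ := (P.assoc x₁ d Y c).2 ⟨bc₁, hdY, hx₁bc₁⟩
  exact ⟨X, Y, d, c₁, hd, hc₁, hX, hY, hXY⟩

end Basic

variable {P : PseudoEffectAlgebra E}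

lemma sm_zero {m : E → ℝ} (hm : IsSignedMeasure P m) : m P.zero = 0 := by
  have h := hm P.zero P.zero P.zero (add_zero' P P.zero)
  linarith

lemma meas_left_le {m : E → ℝ} (hm : IsMeasure P m) {x y a : E} (h : P.add x y = some a) :
    m x ≤ m a := by
  have h1 := hm.1 x y a h; have h2 := hm.2 y; linarith

lemma meas_right_le {m : E → ℝ} (hm : IsMeasure P m) {x y a : E} (h : P.add x y = some a) :
    m y ≤ m a := by
  have h1 := hm.1 x y a h; have h2 := hm.2 x; linarith

lemma meas_le_one {m : E → ℝ} (hm : IsMeasure P m) (a : E) : m a ≤ m P.one := by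
  obtain ⟨d, hd, -⟩ := P.rinv a
  exact meas_left_le hm hd

lemma meas_total_zero {m : E → ℝ} (hm : IsMeasure P m) (h1 : m P.one = 0) : m = 0 := by
  funext a
  have h2 := meas_le_one hm a
  have h3 := hm.2 a
  simp only [Pi.zero_apply]
  linarith

lemma zero_meas : IsMeasure P (0 : E → ℝ) :=
  ⟨fun _ _ _ _ => by simp, fun _ => le_refl 0⟩

lemma smul_meas {m : E → ℝ} (hm : IsMeasure P m) {α : ℝ} (hα : 0 ≤ α) :
    IsMeasure P (α • m) := by
  constructor
  · intro a b ab h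
    simp only [Pi.smul_apply, smul_eq_mul, hm.1 a b ab h]
    ring
  · intro a
    simpa using mul_nonneg hα (hm.2 a)

lemma add_meas {m u : E → ℝ} (hm : IsMeasure P m) (hu : IsMeasure P u) :
    IsMeasure P (m + u) := by
  constructor
  · intro a b ab h
    simp only [Pi.add_apply, hm.1 a b ab h, hu.1 a b ab h]
    ring
  · intro a
    simpa using add_nonneg (hm.2 a) (hu.2 a)

lemma sub_meas {s m : E → ℝ} (hs : IsSignedMeasure P s) (hm : IsSignedMeasure P m)
    (h : m ≤ s) : IsMeasure P (s - m) := by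
  constructor
  · intro a b ab hab
    simp only [Pi.sub_apply, hs a b ab hab, hm a b ab hab]
    ring
  · intro a
    simpa using h a

lemma meas_jordan {m : E → ℝ} (hm : IsMeasure P m) : m ∈ Jordan P :=
  ⟨m, 0, hm, zero_meas, by simp⟩

lemma zero_jordan : (0 : E → ℝ) ∈ Jordan P := meas_jordan zero_meas

lemma jordan_sm {m : E → ℝ} (hm : m ∈ Jordan P) : IsSignedMeasure P m := by
  obtain ⟨m₁, m₂, h₁, h₂, rfl⟩ := hm
  intro a b ab h
  simp only [Pi.sub_apply, h₁.1 a b ab h, h₂.1 a b ab h]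
  ring

/-! ### the supremum `b ∨ 0` -/

variable (P) in
noncomputable def pfun (b : E → ℝ) (a : E) : ℝ :=
  sSup {r : ℝ | ∃ x y, P.add x y = some a ∧ r = b x}

lemma pfun_ub {b w : E → ℝ} (hw : IsMeasure P w) (hbw : b ≤ w) (a : E) :
    ∀ r ∈ {r : ℝ | ∃ x y, P.add x y = some a ∧ r = b x}, r ≤ w a := by
  rintro r ⟨x, y, hxy, rfl⟩
  exact le_trans (hbw x) (meas_left_le hw hxy)

lemma pfun_bdd {b w : E → ℝ} (hw : IsMeasure P w) (hbw : b ≤ w) (a : E) :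
    BddAbove {r : ℝ | ∃ x y, P.add x y = some a ∧ r = b x} :=
  ⟨w a, pfun_ub hw hbw a⟩

lemma pfun_ne (b : E → ℝ) (a : E) :
    Set.Nonempty {r : ℝ | ∃ x y, P.add x y = some a ∧ r = b x} :=
  ⟨b a, a, P.zero, add_zero' P a, rfl⟩

lemma pfun_le {b w : E → ℝ} (hw : IsMeasure P w) (hbw : b ≤ w) (a : E) :
    pfun P b a ≤ w a :=
  csSup_le (pfun_ne b a) (pfun_ub hw hbw a)

lemma le_pfun_self {b w : E → ℝ} (hw : IsMeasure P w) (hbw : b ≤ w) (a : E) :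
    b a ≤ pfun P b a :=
  le_csSup (pfun_bdd hw hbw a) ⟨a, P.zero, add_zero' P a, rfl⟩

lemma pfun_nonneg {b w : E → ℝ} (hb : IsSignedMeasure P b) (hw : IsMeasure P w)
    (hbw : b ≤ w) (a : E) : 0 ≤ pfun P b a :=
  le_csSup (pfun_bdd hw hbw a) ⟨P.zero, a, zero_add' P a, (sm_zero hb).symm⟩

lemma pfun_add (hRDP : P.RDP) {b w : E → ℝ} (hb : IsSignedMeasure P b)
    (hw : IsMeasure P w) (hbw : b ≤ w) {a c x : E} (hx : P.add a c = some x) :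
    pfun P b x = pfun P b a + pfun P b c := by
  apply le_antisymm
  · apply csSup_le (pfun_ne b x)
    rintro r ⟨X, Y, hXY, rfl⟩
    obtain ⟨d₁, d₂, d₃, d₄, h12, h34, h13, h24⟩ := hRDP X Y a c x hXY hx
    have e1 : b X = b d₁ + b d₂ := hb d₁ d₂ X h12
    have l1 : b d₁ ≤ pfun P b a := le_csSup (pfun_bdd hw hbw a) ⟨d₁, d₃, h13, rfl⟩
    have l2 : b d₂ ≤ pfun P b c := le_csSup (pfun_bdd hw hbw c) ⟨d₂, d₄, h24, rfl⟩
    linarith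
  · have key : ∀ r₁ ∈ {r : ℝ | ∃ x' y, P.add x' y = some a ∧ r = b x'},
        ∀ r₂ ∈ {r : ℝ | ∃ x' y, P.add x' y = some c ∧ r = b x'},
        r₁ + r₂ ≤ pfun P b x := by
      rintro r₁ ⟨x₁, y₁, h1, rfl⟩ r₂ ⟨x₂, y₂, h2, rfl⟩
      obtain ⟨X, Y, d, c₁, hdy₁, hy₁x₂, hX, hY, hXY⟩ := combine P h1 h2 hx
      have hbd : b d = b x₂ := by
        have e1 := hb d y₁ c₁ hdy₁
        have e2 := hb y₁ x₂ c₁ hy₁x₂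
        linarith
      have e3 : b X = b x₁ + b x₂ := by rw [hb x₁ d X hX, hbd]
      calc b x₁ + b x₂ = b X := e3.symm
        _ ≤ pfun P b x := le_csSup (pfun_bdd hw hbw x) ⟨X, Y, hXY, rfl⟩
    have h1 : pfun P b a ≤ pfun P b x - pfun P b c := by
      apply csSup_le (pfun_ne b a)
      intro r₁ hr₁
      have h2 : pfun P b c ≤ pfun P b x - r₁ := by
        apply csSup_le (pfun_ne b c)
        intro r₂ hr₂
        have := key r₁ hr₁ r₂ hr₂
        linarith
      linarith
    linarith

lemma pfun_meas (hRDP : P.RDP) {b w : E → ℝ} (hb : IsSignedMeasure P b)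
    (hw : IsMeasure P w) (hbw : b ≤ w) : IsMeasure P (pfun P b) :=
  ⟨fun a c ac h => pfun_add hRDP hb hw hbw h, pfun_nonneg hb hw hbw⟩

/-! ### the infimum `m ∧ u` and the Riesz splitting -/

variable (P) in
noncomputable def qfun (m u : E → ℝ) (a : E) : ℝ :=
  sInf {r : ℝ | ∃ x y, P.add x y = some a ∧ r = m x + u y}

lemma qfun_lb {m u : E → ℝ} (hm : IsMeasure P m) (hu : IsMeasure P u) (a : E) :
    ∀ r ∈ {r : ℝ | ∃ x y, P.add x y = some a ∧ r = m x + u y}, 0 ≤ r := by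
  rintro r ⟨x, y, hxy, rfl⟩
  exact add_nonneg (hm.2 x) (hu.2 y)

lemma qfun_bdd {m u : E → ℝ} (hm : IsMeasure P m) (hu : IsMeasure P u) (a : E) :
    BddBelow {r : ℝ | ∃ x y, P.add x y = some a ∧ r = m x + u y} :=
  ⟨0, qfun_lb hm hu a⟩

lemma qfun_ne (m u : E → ℝ) (a : E) :
    Set.Nonempty {r : ℝ | ∃ x y, P.add x y = some a ∧ r = m x + u y} :=
  ⟨m a + u P.zero, a, P.zero, add_zero' P a, rfl⟩

lemma qfun_nonneg {m u : E → ℝ} (hm : IsMeasure P m) (hu : IsMeasure P u) (a : E) :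
    0 ≤ qfun P m u a :=
  le_csInf (qfun_ne m u a) (qfun_lb hm hu a)

lemma qfun_le_left {m u : E → ℝ} (hm : IsMeasure P m) (hu : IsMeasure P u) (a : E) :
    qfun P m u a ≤ m a := by
  have h := csInf_le (qfun_bdd hm hu a) (qfun_ne m u a).choose_spec
  have h2 : qfun P m u a ≤ m a + u P.zero :=
    csInf_le (qfun_bdd hm hu a) ⟨a, P.zero, add_zero' P a, rfl⟩
  rw [sm_zero hu.1] at h2
  linarith

lemma qfun_le_right {m u : E → ℝ} (hm : IsMeasure P m) (hu : IsMeasure P u) (a : E) :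
    qfun P m u a ≤ u a := by
  have h2 : qfun P m u a ≤ m P.zero + u a :=
    csInf_le (qfun_bdd hm hu a) ⟨P.zero, a, zero_add' P a, rfl⟩
  rw [sm_zero hm.1] at h2
  linarith

lemma qfun_add (hRDP : P.RDP) {m u : E → ℝ} (hm : IsMeasure P m) (hu : IsMeasure P u)
    {a c x : E} (hx : P.add a c = some x) :
    qfun P m u x = qfun P m u a + qfun P m u c := by
  apply le_antisymm
  · have key : ∀ r₁ ∈ {r : ℝ | ∃ x' y, P.add x' y = some a ∧ r = m x' + u y},
        ∀ r₂ ∈ {r : ℝ | ∃ x' y, P.add x' y = some c ∧ r = m x' + u y},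
        qfun P m u x ≤ r₁ + r₂ := by
      rintro r₁ ⟨x₁, y₁, h1, rfl⟩ r₂ ⟨x₂, y₂, h2, rfl⟩
      obtain ⟨X, Y, d, c₁, hdy₁, hy₁x₂, hX, hY, hXY⟩ := combine P h1 h2 hx
      have hmd : m d = m x₂ := by
        have e1 := hm.1 d y₁ c₁ hdy₁
        have e2 := hm.1 y₁ x₂ c₁ hy₁x₂
        linarith
      have e3 : m X + u Y = (m x₁ + u y₁) + (m x₂ + u y₂) := by
        rw [hm.1 x₁ d X hX, hu.1 y₁ y₂ Y hY, hmd]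
        ring
      calc qfun P m u x ≤ m X + u Y := csInf_le (qfun_bdd hm hu x) ⟨X, Y, hXY, rfl⟩
        _ = (m x₁ + u y₁) + (m x₂ + u y₂) := e3
    have h1 : qfun P m u x - qfun P m u c ≤ qfun P m u a := by
      apply le_csInf (qfun_ne m u a)
      intro r₁ hr₁
      have h2 : qfun P m u x - r₁ ≤ qfun P m u c := by
        apply le_csInf (qfun_ne m u c)
        intro r₂ hr₂
        have := key r₁ hr₁ r₂ hr₂
        linarith
      linarith
    linarith
  · apply le_csInf (qfun_ne m u x)
    rintro r ⟨X, Y, hXY, rfl⟩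
    obtain ⟨d₁, d₂, d₃, d₄, h12, h34, h13, h24⟩ := hRDP X Y a c x hXY hx
    have l1 : qfun P m u a ≤ m d₁ + u d₃ := csInf_le (qfun_bdd hm hu a) ⟨d₁, d₃, h13, rfl⟩
    have l2 : qfun P m u c ≤ m d₂ + u d₄ := csInf_le (qfun_bdd hm hu c) ⟨d₂, d₄, h24, rfl⟩
    have e1 := hm.1 d₁ d₂ X h12
    have e2 := hu.1 d₃ d₄ Y h34
    linarith

lemma riesz_split (hRDP : P.RDP) {m u v : E → ℝ} (hm : IsMeasure P m) (hu : IsMeasure P u)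
    (hv : IsMeasure P v) (h : m ≤ u + v) :
    ∃ m₁ m₂ : E → ℝ, IsMeasure P m₁ ∧ IsMeasure P m₂ ∧ m₁ ≤ u ∧ m₂ ≤ v ∧ m = m₁ + m₂ := by
  have hq : IsMeasure P (qfun P m u) :=
    ⟨fun a c ac hx => qfun_add hRDP hm hu hx, qfun_nonneg hm hu⟩
  have hqm : qfun P m u ≤ m := fun a => qfun_le_left hm hu a
  refine ⟨qfun P m u, m - qfun P m u, hq, sub_meas hm.1 hq.1 hqm,
    fun a => qfun_le_right hm hu a, ?_, by funext a; simp⟩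
  intro a
  have hlb : m a - v a ≤ qfun P m u a := by
    apply le_csInf (qfun_ne m u a)
    rintro r ⟨x, y, hxy, rfl⟩
    have e1 := hm.1 x y a hxy
    have e2 : m y ≤ u y + v y := h y
    have e3 : v y ≤ v a := meas_right_le hv hxy
    linarith
  simpa using by linarith [hlb]

/-! ### state facts -/

lemma state_total_le {s : E → ℝ} (hs : IsState P s) (a : E) : s a ≤ 1 := by
  have := meas_le_one hs.1 a
  rwa [hs.2] at this

lemma state_combo {s₁ s₂ : E → ℝ} (h₁ : IsState P s₁) (h₂ : IsState P s₂) {α β : ℝ}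
    (hα : 0 ≤ α) (hβ : 0 ≤ β) (hαβ : α + β = 1) : IsState P (α • s₁ + β • s₂) := by
  refine ⟨add_meas (smul_meas h₁.1 hα) (smul_meas h₂.1 hβ), ?_⟩
  simp [h₁.2, h₂.2, hαβ]

lemma face_rep {F : Set (E → ℝ)} (hF : IsFace (States P) F) {m s : E → ℝ}
    (hm : IsMeasure P m) (hs : s ∈ F) (hms : m ≤ s) :
    ∃ (β : ℝ) (t : E → ℝ), 0 ≤ β ∧ β ≤ 1 ∧ t ∈ F ∧ m = β • t := by
  have hsS : s ∈ States P := hF.2.1 hs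
  set β := m P.one with hβdef
  have hβ0 : 0 ≤ β := hm.2 _
  have hβ1 : β ≤ 1 := by
    have := hms P.one
    rw [hsS.2] at this
    exact this
  rcases eq_or_lt_of_le hβ0 with h0 | h0
  · refine ⟨0, s, le_refl 0, zero_le_one, hs, ?_⟩
    rw [meas_total_zero hm h0.symm, zero_smul]
  rcases eq_or_lt_of_le hβ1 with h1 | h1
  · have hsub : IsMeasure P (s - m) := sub_meas hsS.1.1 hm.1 hms
    have hz : s - m = 0 := by
      apply meas_total_zero hsub
      simp only [Pi.sub_apply]
      rw [hsS.2, ← hβdef, h1]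
      ring
    have hms' : m = s := by
      funext a
      have := congrFun hz a
      simp only [Pi.sub_apply, Pi.zero_apply] at this
      linarith
    exact ⟨1, s, zero_le_one, le_refl 1, hs, by rw [hms', one_smul]⟩
  · have hβne : β ≠ 0 := ne_of_gt h0
    have h1β : (0:ℝ) < 1 - β := by linarith
    have h1βne : (1:ℝ) - β ≠ 0 := ne_of_gt h1β
    set t₁ : E → ℝ := β⁻¹ • m with ht₁def
    set t₂ : E → ℝ := (1 - β)⁻¹ • (s - m) with ht₂def
    have ht₁S : t₁ ∈ States P := by
      refine ⟨smul_meas hm (by positivity), ?_⟩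
      simp only [ht₁def, Pi.smul_apply, smul_eq_mul, ← hβdef]
      field_simp
    have hsub : IsMeasure P (s - m) := sub_meas hsS.1.1 hm.1 hms
    have ht₂S : t₂ ∈ States P := by
      refine ⟨smul_meas hsub (by positivity), ?_⟩
      simp only [ht₂def, Pi.smul_apply, smul_eq_mul, Pi.sub_apply, hsS.2, ← hβdef]
      field_simp
    have hseg : s ∈ openSegment ℝ t₁ t₂ := by
      refine ⟨β, 1 - β, h0, h1β, by ring, ?_⟩
      funext a
      simp only [ht₁def, ht₂def, Pi.add_apply, Pi.smul_apply, smul_eq_mul, Pi.sub_apply]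
      rw [← mul_assoc, ← mul_assoc, mul_inv_cancel₀ hβne, mul_inv_cancel₀ h1βne]
      ring
    have hmem := hF.2.2 ht₁S ht₂S hs hseg
    refine ⟨β, t₁, hβ0, hβ1, hmem, ?_⟩
    funext a
    simp only [ht₁def, Pi.smul_apply, smul_eq_mul]
    rw [← mul_assoc, mul_inv_cancel₀ hβne, one_mul]

/-! ### the set `B` -/

variable (P) in
def Bset (F : Set (E → ℝ)) : Set (E → ℝ) :=
  {s' | s' ∈ States P ∧ ∀ s ∈ F, ∀ α : ℝ, 0 ≤ α → α • s ≤ s' → α = 0}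

lemma alpha_le_one {s s' : E → ℝ} (hs : IsState P s) (hs' : IsState P s') {α : ℝ}
    (hle : α • s ≤ s') : α ≤ 1 := by
  have := hle P.one
  simp only [Pi.smul_apply, smul_eq_mul, hs.2, hs'.2, mul_one] at this
  exact this

lemma B_disjoint {F : Set (E → ℝ)} : Disjoint (Bset P F) F := by
  rw [Set.disjoint_left]
  intro s hsB hsF
  have h := hsB.2 s hsF 1 zero_le_one (by rw [one_smul])
  exact one_ne_zero h

lemma comp_kill {F : Set (E → ℝ)} (hF : IsFace (States P) F) {x s m₁ : E → ℝ} {a : ℝ}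
    (hx : x ∈ Bset P F) (hsF : s ∈ F) (hm₁ : IsMeasure P m₁) (ha : 0 ≤ a)
    (hm₁s : m₁ ≤ s) (hm₁x : m₁ ≤ a • x) : m₁ = 0 := by
  obtain ⟨β, t, hβ0, -, htF, rfl⟩ := face_rep hF hm₁ hsF hm₁s
  suffices hβ : β = 0 by rw [hβ, zero_smul]
  have htS : t ∈ States P := hF.2.1 htF
  rcases eq_or_lt_of_le ha with h | h
  · have h1 := hm₁x P.one
    simp only [Pi.smul_apply, smul_eq_mul, htS.2, mul_one, ← h, zero_mul] at h1
    linarith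
  · have hle : (β / a) • t ≤ x := by
      intro a'
      have h1 := hm₁x a'
      simp only [Pi.smul_apply, smul_eq_mul] at h1 ⊢
      rw [div_mul_eq_mul_div, div_le_iff₀ h]
      nlinarith [htS.1.2 a']
    have h2 := hx.2 t htF (β / a) (div_nonneg hβ0 ha) hle
    have := (div_eq_zero_iff.1 h2).resolve_right (ne_of_gt h)
    exact this

lemma B_face {F : Set (E → ℝ)} (hRDP : P.RDP) (hF : IsFace (States P) F) :
    IsFace (States P) (Bset P F) := by
  constructor
  · -- convex
    intro x hx y hy a b ha hb hab
    refine ⟨state_combo hx.1 hy.1 ha hb hab, ?_⟩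
    intro s hsF α hα hle
    have hsS : s ∈ States P := hF.2.1 hsF
    have hcomb : IsState P (a • x + b • y) := state_combo hx.1 hy.1 ha hb hab
    have hmα : IsMeasure P (α • s) := smul_meas hsS.1 hα
    obtain ⟨m₁, m₂, hm₁, hm₂, hm₁u, hm₂v, heq⟩ :=
      riesz_split hRDP hmα (smul_meas hx.1.1 ha) (smul_meas hy.1.1 hb) hle
    have hα1 : α ≤ 1 := alpha_le_one hsS hcomb hle
    have hαs_le_s : α • s ≤ s := by
      intro a'
      simp only [Pi.smul_apply, smul_eq_mul]
      nlinarith [hsS.1.2 a']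
    have hm₁s : m₁ ≤ s := by
      intro a'
      have h1 := congrFun heq a'
      have h2 := hm₂.2 a'
      have h3 := hαs_le_s a'
      simp only [Pi.add_apply] at h1
      simp only [Pi.smul_apply, smul_eq_mul] at h1 h3 ⊢
      linarith
    have hm₂s : m₂ ≤ s := by
      intro a'
      have h1 := congrFun heq a'
      have h2 := hm₁.2 a'
      have h3 := hαs_le_s a'
      simp only [Pi.add_apply] at h1
      simp only [Pi.smul_apply, smul_eq_mul] at h1 h3 ⊢
      linarith
    have hz₁ : m₁ = 0 := comp_kill hF hx hsF hm₁ ha hm₁s hm₁u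
    have hz₂ : m₂ = 0 := comp_kill hF hy hsF hm₂ hb hm₂s hm₂v
    have : α • s = 0 := by rw [heq, hz₁, hz₂, add_zero]
    have h1 := congrFun this P.one
    simp only [Pi.smul_apply, smul_eq_mul, hsS.2, mul_one, Pi.zero_apply] at h1
    exact h1
  · -- extreme
    constructor
    · exact fun x hx => hx.1
    · intro x₁ hx₁ x₂ hx₂ z hz hseg
      obtain ⟨a, b, ha, hb, hab, hcomb⟩ := hseg
      suffices hboth : x₁ ∈ Bset P F ∧ x₂ ∈ Bset P F from hboth.1
      constructor
      · refine ⟨hx₁, fun s hsF α hα hle => ?_⟩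
        have hsS : s ∈ States P := hF.2.1 hsF
        have h1 : (a * α) • s ≤ z := by
          intro a'
          have h2 := hle a'
          have h3 := congrFun hcomb a'
          have h4 := hx₂.1.2 a'
          simp only [Pi.add_apply, Pi.smul_apply, smul_eq_mul] at h2 h3 ⊢
          nlinarith
        have h5 := hz.2 s hsF (a * α) (by positivity) h1
        rcases mul_eq_zero.1 h5 with h | h
        · exact absurd h (ne_of_gt ha)
        · exact h
      · refine ⟨hx₂, fun s hsF α hα hle => ?_⟩
        have hsS : s ∈ States P := hF.2.1 hsF
        have h1 : (b * α) • s ≤ z := by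
          intro a'
          have h2 := hle a'
          have h3 := congrFun hcomb a'
          have h4 := hx₁.1.2 a'
          simp only [Pi.add_apply, Pi.smul_apply, smul_eq_mul] at h2 h3 ⊢
          nlinarith
        have h5 := hz.2 s hsF (b * α) (by positivity) h1
        rcases mul_eq_zero.1 h5 with h | h
        · exact absurd h (ne_of_gt hb)
        · exact h

lemma compl_sub {F : Set (E → ℝ)} (hF : IsFace (States P) F) :
    ComplFace (States P) F ⊆ Bset P F := by
  rintro s' ⟨G, ⟨hG, hGF⟩, hs'G⟩
  have hs'S : s' ∈ States P := hG.2.1 hs'G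
  refine ⟨hs'S, fun s hsF α hα hle => ?_⟩
  by_contra hα0
  have hαpos : 0 < α := lt_of_le_of_ne hα (Ne.symm hα0)
  have hsS : s ∈ States P := hF.2.1 hsF
  have hm : IsMeasure P (α • s) := smul_meas hsS.1 hα
  obtain ⟨β, t, hβ0, -, htG, heq⟩ := face_rep hG hm hs'G hle
  have htS : t ∈ States P := hG.2.1 htG
  have hβα : β = α := by
    have h1 := congrFun heq P.one
    simp only [Pi.smul_apply, smul_eq_mul, hsS.2, htS.2, mul_one] at h1
    exact h1.symm
  have hst : s = t := by
    funext a
    have h1 := congrFun heq a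
    simp only [Pi.smul_apply, smul_eq_mul, hβα] at h1
    exact mul_left_cancel₀ (ne_of_gt hαpos) h1
  have hsG : s ∈ G := by rw [hst]; exact htG
  exact (Set.disjoint_left.1 hGF hsG) hsF

lemma compl_eq_B {F : Set (E → ℝ)} (hRDP : P.RDP) (hF : IsFace (States P) F) :
    ComplFace (States P) F = Bset P F := by
  apply Set.Subset.antisymm (compl_sub hF)
  intro s' hs'
  exact Set.mem_sUnion.2 ⟨Bset P F, ⟨B_face hRDP hF, B_disjoint⟩, hs'⟩

lemma B_eq_A {F : Set (E → ℝ)} (hRDP : P.RDP) (hF : IsFace (States P) F) :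
    Bset P F = {s' | s' ∈ States P ∧ ∀ s ∈ F, IsGlbIn (Jordan P) {s', s} 0} := by
  ext s'
  constructor
  · rintro ⟨hs'S, hB⟩
    refine ⟨hs'S, fun s hsF => ?_⟩
    have hsS : s ∈ States P := hF.2.1 hsF
    refine ⟨zero_jordan, ?_, ?_⟩
    · intro m hm
      rcases Set.mem_insert_iff.1 hm with rfl | hm
      · intro a; simpa using hs'S.1.2 a
      · rcases Set.mem_singleton_iff.1 hm with rfl
        intro a; simpa using hsS.1.2 a
    · intro b hbJ hlb
      have hbs' : b ≤ s' := hlb s' (Set.mem_insert _ _)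
      have hbs : b ≤ s := hlb s (Set.mem_insert_of_mem _ rfl)
      have hbsm := jordan_sm hbJ
      have hpm : IsMeasure P (pfun P b) := pfun_meas hRDP hbsm hs'S.1 hbs'
      have hps : pfun P b ≤ s := fun a => pfun_le hsS.1 hbs a
      have hps' : pfun P b ≤ s' := fun a => pfun_le hs'S.1 hbs' a
      obtain ⟨β, t, hβ0, -, htF, heq⟩ := face_rep hF hpm hsF hps
      have hβ : β = 0 := hB t htF β hβ0 (heq ▸ hps')
      have hp0 : pfun P b = 0 := by rw [heq, hβ, zero_smul]
      intro a
      have h1 := le_pfun_self hsS.1 hbs a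
      rw [hp0] at h1
      exact h1
  · rintro ⟨hs'S, hA⟩
    refine ⟨hs'S, fun s hsF α hα hle => ?_⟩
    have hsS : s ∈ States P := hF.2.1 hsF
    have hα1 : α ≤ 1 := alpha_le_one hsS hs'S hle
    have hαs : α • s ≤ s := by
      intro a
      simp only [Pi.smul_apply, smul_eq_mul]
      nlinarith [hsS.1.2 a]
    have hJ : α • s ∈ Jordan P := meas_jordan (smul_meas hsS.1 hα)
    have hlb : ∀ m ∈ ({s', s} : Set (E → ℝ)), α • s ≤ m := by
      intro m hm
      rcases Set.mem_insert_iff.1 hm with rfl | hm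
      · exact hle
      · rcases Set.mem_singleton_iff.1 hm with rfl
        exact hαs
    have h1 := (hA s hsF).2.2 (α • s) hJ hlb
    have h2 := h1 P.one
    simp only [Pi.smul_apply, smul_eq_mul, hsS.2, mul_one, Pi.zero_apply] at h2
    linarith

end Stmt4Aux

/-- For a face `F` of the nonempty state space of a pseudo effect algebra
with (RDP), the complementary face `F'` equals the set of states `s'` with `s' ∧ s = 0`
(infimum in `J(E)`) for all `s ∈ F`; equivalently, the set of states `s'` such that
`α • s ≤⁺ s'` with `s ∈ F`, `α ≥ 0` forces `α = 0`. -/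
theorem stmt4 {E : Type u} (P : PseudoEffectAlgebra E) (hRDP : P.RDP)
    (hS : (States P).Nonempty) (F : Set (E → ℝ)) (hF : IsFace (States P) F) :
    ComplFace (States P) F =
      {s' | s' ∈ States P ∧ ∀ s ∈ F, IsGlbIn (Jordan P) {s', s} 0} ∧
    ComplFace (States P) F =
      {s' | s' ∈ States P ∧ ∀ s ∈ F, ∀ α : ℝ, 0 ≤ α → α • s ≤ s' → α = 0} := by
  have h2 : ComplFace (States P) F = Stmt4Aux.Bset P F := Stmt4Aux.compl_eq_B hRDP hF
  refine ⟨?_, ?_⟩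
  · rw [h2, Stmt4Aux.B_eq_A hRDP hF]
  · rw [h2]; rfl
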